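/- The function f(x,y) = x·tanh(y) satisfies (1 - f_y²)f_xx + 2 f_x f_y f_xy + (1 - f_x²) f_yy = 0 on all of ℝ². -/

import Mathlib

open Real

lemma my_hasDerivAt_tanh (y : ℝ) :
    HasDerivAt Real.tanh (1 / Real.cosh y ^ 2) y := by
  have h := (Real.hasDerivAt_sinh y).div (Real.hasDerivAt_cosh y)
    (ne_of_gt (Real.cosh_pos y))
  have heq : (Real.sinh / Real.cosh) = Real.tanh := by
    funext x; rw [Pi.div_apply, Real.tanh_eq_sinh_div_cosh]
  rw [heq] at h
  have : (Real.cosh y * Real.cosh y - Real.sinh y * Real.sinh y) / Real.cosh y ^ 2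
      = 1 / Real.cosh y ^ 2 := by
    have := Real.cosh_sq_sub_sinh_sq y
    rw [show Real.cosh y * Real.cosh y - Real.sinh y * Real.sinh y
        = Real.cosh y ^ 2 - Real.sinh y ^ 2 by ring, this]
  rwa [this] at h

lemma my_deriv_tanh (y : ℝ) : deriv Real.tanh y = 1 / Real.cosh y ^ 2 :=
  (my_hasDerivAt_tanh y).deriv

/-- The function `f(x,y) = x·tanh y` satisfies the zero mean curvature
equation `(1 - f_y²)f_xx + 2 f_x f_y f_xy + (1 - f_x²) f_yy = 0` on all of `ℝ²`. -/
theorem stmt15 :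
    ∀ x y : ℝ,
      let f : ℝ → ℝ → ℝ := fun x' y' => x' * Real.tanh y'
      let fx := deriv (fun x' => f x' y) x
      let fy := deriv (fun y' => f x y') y
      let fxx := deriv (fun x' => deriv (fun x'' => f x'' y) x') x
      let fxy := deriv (fun y' => deriv (fun x' => f x' y') x) y
      let fyy := deriv (fun y' => deriv (fun y'' => f x y'') y') y
      (1 - fy ^ 2) * fxx + 2 * fx * fy * fxy + (1 - fx ^ 2) * fyy = 0 := by
  intro x y f fx fy fxx fxy fyy
  have hx : ∀ t u : ℝ, deriv (fun x' => x' * Real.tanh u) t = Real.tanh u := by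
    intro t u
    simpa using ((hasDerivAt_id t).mul_const (Real.tanh u)).deriv
  have hy : ∀ a t : ℝ, deriv (fun y' => a * Real.tanh y') t = a * (1 / Real.cosh t ^ 2) := by
    intro a t
    exact ((my_hasDerivAt_tanh t).const_mul a).deriv
  have hfx : fx = Real.tanh y := hx x y
  have hfy : fy = x * (1 / Real.cosh y ^ 2) := hy x y
  have hfxx : fxx = 0 := by
    show deriv (fun x' => deriv (fun x'' => x'' * Real.tanh y) x') x = 0
    have : (fun x' : ℝ => deriv (fun x'' => x'' * Real.tanh y) x') = fun _ => Real.tanh y := by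
      funext t; exact hx t y
    rw [this, deriv_const]
  have hfxy : fxy = 1 / Real.cosh y ^ 2 := by
    show deriv (fun y' => deriv (fun x' => x' * Real.tanh y') x) y = _
    have : (fun y' : ℝ => deriv (fun x' => x' * Real.tanh y') x) = Real.tanh := by
      funext t; exact hx x t
    rw [this, my_deriv_tanh]
  have hcosh : HasDerivAt (fun t : ℝ => Real.cosh t ^ 2) (2 * Real.cosh y * Real.sinh y) y := by
    have := (Real.hasDerivAt_cosh y).fun_pow 2
    simpa [mul_comm, mul_assoc, mul_left_comm] using this
  have hinv : HasDerivAt (fun t : ℝ => 1 / Real.cosh t ^ 2)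
      (-(2 * Real.cosh y * Real.sinh y) / (Real.cosh y ^ 2) ^ 2) y := by
    simpa [one_div] using hcosh.fun_inv (by positivity)
  have hfyy : fyy = x * (-(2 * Real.cosh y * Real.sinh y) / (Real.cosh y ^ 2) ^ 2) := by
    show deriv (fun y' => deriv (fun y'' => x * Real.tanh y'') y') y = _
    have : (fun y' : ℝ => deriv (fun y'' => x * Real.tanh y'') y')
        = fun y' => x * (1 / Real.cosh y' ^ 2) := by
      funext t; exact hy x t
    rw [this]
    exact (hinv.const_mul x).deriv
  rw [hfx, hfy, hfxx, hfxy, hfyy]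
  have hc : Real.cosh y ≠ 0 := ne_of_gt (Real.cosh_pos y)
  have ht : Real.tanh y = Real.sinh y / Real.cosh y := Real.tanh_eq_sinh_div_cosh y
  have hid : Real.cosh y ^ 2 - Real.sinh y ^ 2 = 1 := Real.cosh_sq_sub_sinh_sq y
  rw [ht]
  field_simp
  nlinarith [hid, sq_nonneg (Real.cosh y), sq_nonneg (Real.sinh y), (by rw [hid] : x * Real.sinh y * (Real.cosh y ^ 2 - Real.sinh y ^ 2) = x * Real.sinh y * 1)]
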